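/- arXiv:math/0505251 — 7 statements merged into one kernel-verified Lean document; each statement's English description precedes it below -/
import Mathlib

section
/- Let n, k ∈ ℕ, let z : Fin n → ℂ be injective, and let T be an n×n complex matrix with Matrix.charpoly T = ∏ i, (X − C (z i)). For a k×k matrix of polynomials R : Matrix (Fin k) (Fin k) (Polynomial ℂ), define R(T) : Matrix (Fin n × Fin k) (Fin n × Fin k) ℂ by R(T) = ∑ a, ∑ b, (Polynomial.aeval T (R a b)) ⊗ₖ (Matrix.stdBasisMatrix a b 1). Then R(T) = ∑ i, (Polynomial.aeval T (ℓ i)) ⊗ₖ (R.map (Polynomial.eval (z i))), where ℓ i = Lagrange.basis Finset.univ z i and R.map (Polynomial.eval (z i)) is the k×k complex matrix whose (a,b)-entry is (R a b).eval (z i). -/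
open Kronecker Polynomial

lemma aeval_eq_sum_lagrange (n : ℕ) (z : Fin n → ℂ) (hz : Function.Injective z)
    (T : Matrix (Fin n) (Fin n) ℂ)
    (hT : T.charpoly = ∏ i, (X - C (z i))) (p : ℂ[X]) :
    Polynomial.aeval T p =
      ∑ i, Polynomial.eval (z i) p • Polynomial.aeval T (Lagrange.basis Finset.univ z i) := by
  have hinj : Set.InjOn z (Finset.univ : Finset (Fin n)) := hz.injOn
  set q := Lagrange.interpolate Finset.univ z (fun i => p.eval (z i)) with hq
  have hdvd : (∏ i, (X - C (z i))) ∣ (p - q) := by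
    apply Finset.prod_dvd_of_coprime
    · intro i _ j _ hij
      exact Polynomial.pairwise_coprime_X_sub_C hz hij
    · intro i _
      rw [dvd_iff_isRoot]
      simp only [IsRoot, eval_sub, hq,
        Lagrange.eval_interpolate_at_node _ hinj (Finset.mem_univ i), sub_self]
  obtain ⟨c, hc⟩ := hdvd
  have h0 : Polynomial.aeval T (p - q) = 0 := by
    rw [hc, map_mul, ← hT, Matrix.aeval_self_charpoly, zero_mul]
  have hpq : Polynomial.aeval T p = Polynomial.aeval T q := by
    rw [map_sub] at h0
    exact sub_eq_zero.mp h0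
  rw [hpq, hq, Lagrange.interpolate_apply, map_sum]
  refine Finset.sum_congr rfl fun i _ => ?_
  rw [map_mul, aeval_C, Algebra.smul_def]

theorem stmt_4 (n k : ℕ) (z : Fin n → ℂ) (hz : Function.Injective z)
    (T : Matrix (Fin n) (Fin n) ℂ)
    (hT : T.charpoly = ∏ i, (Polynomial.X - Polynomial.C (z i)))
    (R : Matrix (Fin k) (Fin k) (Polynomial ℂ)) :
    (∑ a, ∑ b, (Polynomial.aeval T (R a b)) ⊗ₖ (Matrix.single a b (1 : ℂ))) =
      ∑ i, (Polynomial.aeval T (Lagrange.basis Finset.univ z i)) ⊗ₖ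
        (R.map (Polynomial.eval (z i))) := by
  ext ⟨i, a⟩ ⟨j, b⟩
  simp only [Matrix.sum_apply, Matrix.kroneckerMap_apply, Matrix.single, Matrix.map_apply,
    Matrix.of_apply]
  rw [Finset.sum_eq_single a, Finset.sum_eq_single b]
  · simp only [and_self, if_true]
    rw [aeval_eq_sum_lagrange n z hz T hT (R a b)]
    simp [Matrix.sum_apply, Matrix.smul_apply, mul_comm]
  · intro b' _ hb'; simp [hb']
  · intro h; exact absurd (Finset.mem_univ b) h
  · intro a' _ ha'; simp [ha']
  · intro h; exact absurd (Finset.mem_univ a) h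
end

section
/- Let H be a complex Hilbert space, M : H →L[ℂ] H a bounded operator, z1, z2 ∈ ℂ, and k1, k2 ∈ H linearly independent vectors with M* k1 = (conj z1) • k1 and M* k2 = (conj z2) • k2. Set a = ‖k1‖², b = ‖k2‖², g = ⟪k1, k2⟫, and d = a*b − |g|² (which is positive by the strict Cauchy–Schwarz inequality, since k1, k2 are linearly independent). Define e1 = (√a)⁻¹ • k1, e2 = (√b)⁻¹ • k2, f = (√(a*d))⁻¹ • (a • k2 − g • k1). Let μ ∈ ℂ with |μ| ≤ 1 and set h1 = (0, e1) and h2 = ((√(1 − |μ|²)) • e2, μ • f) in H ⊕ H. Then: (i) h1 and h2 are orthonormal in H ⊕ H; (ii) (M* ⊕ M*) h1 = (conj z1) • h1; and (iii) (M* ⊕ M*) h2 = (conj z2) • h2 + ((μ * (conj z2 − conj z1) * g) / √d) • h1. In particular, the span of {h1, h2} is invariant under M* ⊕ M* and the matrix of the restriction of M* ⊕ M* in the ordered orthonormal basis (h1, h2) is !![conj z1, μ (conj z2 − conj z1) g / √d; 0, conj z2]. -/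
open ContinuousLinearMap

theorem stmt_5 {H : Type*} [NormedAddCommGroup H] [InnerProductSpace ℂ H]
    [CompleteSpace H]
    (M : H →L[ℂ] H) (z1 z2 : ℂ) (k1 k2 : H)
    (hind : LinearIndependent ℂ ![k1, k2])
    (hM1 : ContinuousLinearMap.adjoint M k1 = (starRingEnd ℂ) z1 • k1)
    (hM2 : ContinuousLinearMap.adjoint M k2 = (starRingEnd ℂ) z2 • k2)
    (a b d : ℝ) (g : ℂ)
    (ha : a = ‖k1‖ ^ 2) (hb : b = ‖k2‖ ^ 2)
    (hg : g = (inner ℂ k1 k2 : ℂ))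
    (hd : d = a * b - ‖g‖ ^ 2)
    (e1 e2 f : H)
    (he1 : e1 = ((Real.sqrt a : ℂ))⁻¹ • k1)
    (he2 : e2 = ((Real.sqrt b : ℂ))⁻¹ • k2)
    (hf : f = ((Real.sqrt (a * d) : ℂ))⁻¹ • ((a : ℂ) • k2 - g • k1))
    (μ : ℂ) (hμ : ‖μ‖ ≤ 1)
    (h1 h2 : WithLp 2 (H × H))
    (hh1 : h1 = (WithLp.equiv 2 (H × H)).symm (0, e1))
    (hh2 : h2 = (WithLp.equiv 2 (H × H)).symm
      (((Real.sqrt (1 - ‖μ‖ ^ 2) : ℂ)) • e2, μ • f)) :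
    (‖h1‖ = 1 ∧ ‖h2‖ = 1 ∧ (inner ℂ h1 h2 : ℂ) = 0) ∧
    (WithLp.equiv 2 (H × H)).symm
        (ContinuousLinearMap.adjoint M ((WithLp.equiv 2 (H × H)) h1).1,
         ContinuousLinearMap.adjoint M ((WithLp.equiv 2 (H × H)) h1).2)
      = (starRingEnd ℂ) z1 • h1 ∧
    (WithLp.equiv 2 (H × H)).symm
        (ContinuousLinearMap.adjoint M ((WithLp.equiv 2 (H × H)) h2).1,
         ContinuousLinearMap.adjoint M ((WithLp.equiv 2 (H × H)) h2).2)
      = (starRingEnd ℂ) z2 • h2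
        + ((μ * ((starRingEnd ℂ) z2 - (starRingEnd ℂ) z1) * g)
            / (Real.sqrt d : ℂ)) • h1 := by
  have hk1 : k1 ≠ 0 := by simpa using hind.ne_zero 0
  have hk2 : k2 ≠ 0 := by simpa using hind.ne_zero 1
  have hnk1' : 0 < ‖k1‖ := norm_pos_iff.2 hk1
  have hnk2' : 0 < ‖k2‖ := norm_pos_iff.2 hk2
  have ha0 : 0 < a := by rw [ha]; positivity
  have hb0 : 0 < b := by rw [hb]; positivity
  -- strict Cauchy-Schwarz
  have hcs : ‖(inner ℂ k1 k2 : ℂ)‖ < ‖k1‖ * ‖k2‖ := by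
    rcases lt_or_eq_of_le (norm_inner_le_norm (𝕜 := ℂ) k1 k2) with h | h
    · exact h
    · exfalso
      obtain ⟨r, hr0, hr⟩ := (norm_inner_eq_norm_iff hk1 hk2).1 h
      have := Fintype.linearIndependent_iff.1 hind ![r, -1] (by
        simp [Fin.sum_univ_two, hr]) 1
      simp at this
  have hd0 : 0 < d := by
    have h1' : ‖g‖ = ‖(inner ℂ k1 k2 : ℂ)‖ := by rw [hg]
    have : ‖g‖ ^ 2 < a * b := by
      rw [ha, hb, h1']
      calc ‖(inner ℂ k1 k2 : ℂ)‖ ^ 2 < (‖k1‖ * ‖k2‖) ^ 2 :=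
            pow_lt_pow_left₀ hcs (norm_nonneg _) (by norm_num)
        _ = ‖k1‖ ^ 2 * ‖k2‖ ^ 2 := by ring
    rw [hd]; linarith
  have hnk1 : ‖k1‖ = Real.sqrt a := by rw [ha, Real.sqrt_sq (norm_nonneg _)]
  have hnk2 : ‖k2‖ = Real.sqrt b := by rw [hb, Real.sqrt_sq (norm_nonneg _)]
  -- key inner products
  have hik11 : (inner ℂ k1 k1 : ℂ) = (a : ℂ) := by
    rw [inner_self_eq_norm_sq_to_K, ha]; norm_cast
  have hik22 : (inner ℂ k2 k2 : ℂ) = (b : ℂ) := by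
    rw [inner_self_eq_norm_sq_to_K, hb]; norm_cast
  have hik12 : (inner ℂ k1 k2 : ℂ) = g := hg.symm
  have hik21 : (inner ℂ k2 k1 : ℂ) = (starRingEnd ℂ) g := by
    rw [← inner_conj_symm, hik12]
  have hgg : (starRingEnd ℂ) g * g = ((‖g‖ : ℝ) : ℂ) ^ 2 := by
    rw [mul_comm, Complex.mul_conj]
    norm_cast
    exact (Complex.sq_norm g).symm
  -- norms of e1, e2
  have hne1 : ‖e1‖ = 1 := by
    rw [he1, norm_smul, hnk1]
    simp only [norm_inv, Complex.norm_real, Real.norm_eq_abs,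
      abs_of_nonneg (Real.sqrt_nonneg a)]
    rw [inv_mul_cancel₀ (by positivity)]
  have hne2 : ‖e2‖ = 1 := by
    rw [he2, norm_smul, hnk2]
    simp only [norm_inv, Complex.norm_real, Real.norm_eq_abs,
      abs_of_nonneg (Real.sqrt_nonneg b)]
    rw [inv_mul_cancel₀ (by positivity)]
  -- inner of the unnormalized f-vector with itself
  have hiff : (inner ℂ ((a : ℂ) • k2 - g • k1) ((a : ℂ) • k2 - g • k1) : ℂ)
      = ((a * d : ℝ) : ℂ) := by
    rw [inner_sub_sub_self]
    simp only [inner_smul_left, inner_smul_right, hik11, hik22, hik12, hik21,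
      Complex.conj_ofReal]
    rw [hd]
    push_cast
    linear_combination (-(a : ℂ)) * hgg
  have hnf : ‖f‖ = 1 := by
    have hnv : ‖(a : ℂ) • k2 - g • k1‖ = Real.sqrt (a * d) := by
      rw [@norm_eq_sqrt_re_inner ℂ, hiff]
      simp
    rw [hf, norm_smul, hnv]
    simp only [norm_inv, Complex.norm_real, Real.norm_eq_abs,
      abs_of_nonneg (Real.sqrt_nonneg _)]
    rw [inv_mul_cancel₀ (by positivity)]
  have hief : (inner ℂ e1 f : ℂ) = 0 := by
    rw [he1, hf, inner_smul_left, inner_smul_right, inner_sub_right,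
      inner_smul_right, inner_smul_right, hik11, hik12]
    ring
  -- M* on e1, e2, f
  have hMe1 : ContinuousLinearMap.adjoint M e1 = (starRingEnd ℂ) z1 • e1 := by
    rw [he1, map_smul, hM1, smul_comm]
  have hMe2 : ContinuousLinearMap.adjoint M e2 = (starRingEnd ℂ) z2 • e2 := by
    rw [he2, map_smul, hM2, smul_comm]
  have hsqrtad : ((Real.sqrt (a * d) : ℝ) : ℂ)⁻¹
      = ((Real.sqrt a : ℝ) : ℂ)⁻¹ * ((Real.sqrt d : ℝ) : ℂ)⁻¹ := by
    rw [Real.sqrt_mul ha0.le]; push_cast; rw [mul_inv]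
  have hMf : ContinuousLinearMap.adjoint M f
      = (starRingEnd ℂ) z2 • f
        + ((((starRingEnd ℂ) z2 - (starRingEnd ℂ) z1) * g) / (Real.sqrt d : ℂ)) • e1 := by
    rw [hf, map_smul, map_sub, map_smul, map_smul, hM1, hM2, he1, hsqrtad,
      div_eq_mul_inv]
    module
  -- norms of h1, h2 and orthogonality
  have hμ2 : ‖μ‖ ^ 2 ≤ 1 := by
    calc ‖μ‖ ^ 2 ≤ 1 ^ 2 := pow_le_pow_left₀ (norm_nonneg μ) hμ 2
      _ = 1 := one_pow 2
  have Hn1 : ‖h1‖ = 1 := by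
    rw [hh1, WithLp.prod_norm_eq_of_L2]
    simp [hne1]
  have Hn2 : ‖h2‖ = 1 := by
    rw [hh2, WithLp.prod_norm_eq_of_L2]
    simp only [WithLp.equiv_symm_apply, WithLp.toLp_fst, WithLp.toLp_snd]
    rw [norm_smul, norm_smul, hne2, hnf]
    simp only [Complex.norm_real, Real.norm_eq_abs,
      abs_of_nonneg (Real.sqrt_nonneg _), mul_one]
    rw [Real.sq_sqrt (by linarith)]
    have : ‖μ‖ ^ 2 = ‖μ‖ ^ 2 := rfl
    rw [this]
    rw [show 1 - ‖μ‖ ^ 2 + ‖μ‖ ^ 2 = 1 by ring, Real.sqrt_one]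
  have Ho : (inner ℂ h1 h2 : ℂ) = 0 := by
    rw [hh1, hh2, WithLp.prod_inner_apply]
    simp [inner_smul_right, hief]
  refine ⟨⟨Hn1, Hn2, Ho⟩, ?_, ?_⟩
  · rw [hh1]
    simp only [Equiv.apply_symm_apply, map_zero, hMe1]
    rw [WithLp.equiv_symm_apply, ← WithLp.toLp_smul]
    congr 1
    rw [Prod.smul_mk, smul_zero]
  · rw [hh1, hh2]
    simp only [Equiv.apply_symm_apply, map_smul, hMe2, hMf]
    rw [WithLp.equiv_symm_apply, ← WithLp.toLp_smul, ← WithLp.toLp_smul, ← WithLp.toLp_add]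
    congr 1
    rw [Prod.smul_mk, Prod.smul_mk, Prod.mk_add_mk, smul_zero]
    refine Prod.ext ?_ ?_
    · simp only [add_zero]
      rw [smul_comm]
    · simp only
      rw [smul_add, smul_smul, smul_smul, smul_smul]
      congr 2
      · ring
      · rw [div_eq_mul_inv, div_eq_mul_inv]; ring
end

section
/- Let H be a complex Hilbert space, M : H →L[ℂ] H a bounded operator, z ∈ ℂ, and k, k' ∈ H linearly independent vectors with M* k = (conj z) • k and M* k' = k + (conj z) • k'. Set a = ‖k‖², b = ‖k'‖², c = ⟪k, k'⟫, and d = a*b − |c|² (which is positive by the strict Cauchy–Schwarz inequality, since k, k' are linearly independent). Define e = (√a)⁻¹ • k and f = (√(a*d))⁻¹ • (a • k' − c • k). Let λ ∈ ℂ with |λ| ≤ 1 and set h1 = (0, e) and h2 = ((√(1 − |λ|²)) • e, λ • f) in H ⊕ H. Then: (i) h1 and h2 are orthonormal in H ⊕ H; (ii) (M* ⊕ M*) h1 = (conj z) • h1; and (iii) (M* ⊕ M*) h2 = (conj z) • h2 + ((λ * a) / √d) • h1. In particular, the span of {h1, h2} is invariant under M* ⊕ M* and the matrix of the restriction of M*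 ⊕ M* in the ordered orthonormal basis (h1, h2) is !![conj z, λ a / √d; 0, conj z]. -/
open ContinuousLinearMap

theorem stmt_6 {H : Type*} [NormedAddCommGroup H] [InnerProductSpace ℂ H]
    [CompleteSpace H]
    (M : H →L[ℂ] H) (z : ℂ) (k k' : H)
    (hind : LinearIndependent ℂ ![k, k'])
    (hMk : ContinuousLinearMap.adjoint M k = (starRingEnd ℂ) z • k)
    (hMk' : ContinuousLinearMap.adjoint M k' = k + (starRingEnd ℂ) z • k')
    (a b d : ℝ) (c : ℂ)
    (ha : a = ‖k‖ ^ 2) (hb : b = ‖k'‖ ^ 2)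
    (hc : c = (inner ℂ k k' : ℂ))
    (hd : d = a * b - ‖c‖ ^ 2)
    (e f : H)
    (he : e = ((Real.sqrt a : ℂ))⁻¹ • k)
    (hf : f = ((Real.sqrt (a * d) : ℂ))⁻¹ • ((a : ℂ) • k' - c • k))
    (lam : ℂ) (hlam : ‖lam‖ ≤ 1)
    (h1 h2 : WithLp 2 (H × H))
    (hh1 : h1 = (WithLp.equiv 2 (H × H)).symm (0, e))
    (hh2 : h2 = (WithLp.equiv 2 (H × H)).symm
      (((Real.sqrt (1 - ‖lam‖ ^ 2) : ℂ)) • e, lam • f)) :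
    (‖h1‖ = 1 ∧ ‖h2‖ = 1 ∧ (inner ℂ h1 h2 : ℂ) = 0) ∧
    (WithLp.equiv 2 (H × H)).symm
        (ContinuousLinearMap.adjoint M ((WithLp.equiv 2 (H × H)) h1).1,
         ContinuousLinearMap.adjoint M ((WithLp.equiv 2 (H × H)) h1).2)
      = (starRingEnd ℂ) z • h1 ∧
    (WithLp.equiv 2 (H × H)).symm
        (ContinuousLinearMap.adjoint M ((WithLp.equiv 2 (H × H)) h2).1,
         ContinuousLinearMap.adjoint M ((WithLp.equiv 2 (H × H)) h2).2)
      = (starRingEnd ℂ) z • h2 + ((lam * (a : ℂ)) / (Real.sqrt d : ℂ)) • h1 := by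
  -- unpack linear independence
  have hpair := linearIndependent_fin2.mp hind
  simp only [Matrix.cons_val_one, Matrix.head_cons, Matrix.cons_val_zero] at hpair
  obtain ⟨hk'0, hnotmul⟩ := hpair
  have hk0 : k ≠ 0 := fun h => hnotmul 0 (by simp [h])
  have ha0 : 0 < a := by
    rw [ha]; exact pow_pos (norm_pos_iff.mpr hk0) 2
  have hb0 : 0 < b := by
    rw [hb]; exact pow_pos (norm_pos_iff.mpr hk'0) 2
  have hclt : ‖(inner ℂ k' k : ℂ)‖ < ‖k'‖ * ‖k‖ := by
    rcases lt_or_eq_of_le (norm_inner_le_norm (𝕜 := ℂ) k' k) with h | h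
    · exact h
    · exfalso
      obtain ⟨r, _, hr⟩ := (norm_inner_eq_norm_iff hk'0 hk0).mp h
      exact hnotmul r hr.symm
  have habs : ‖c‖ = ‖(inner ℂ k' k : ℂ)‖ := by
    rw [hc, ← inner_conj_symm k' k, RCLike.norm_conj]
  have hd0 : 0 < d := by
    have h1 : ‖c‖ < Real.sqrt a * Real.sqrt b := by
      rw [habs, ha, hb, Real.sqrt_sq (norm_nonneg k), Real.sqrt_sq (norm_nonneg k')]
      rw [mul_comm]; exact hclt
    have h2 : (0:ℝ) ≤ ‖c‖ := norm_nonneg c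
    have h3 : Real.sqrt a * Real.sqrt b = Real.sqrt (a*b) := (Real.sqrt_mul ha0.le b).symm
    rw [hd]
    nlinarith [Real.sq_sqrt (mul_nonneg ha0.le hb0.le)]
  have hsa : Real.sqrt a = ‖k‖ := by rw [ha, Real.sqrt_sq (norm_nonneg k)]
  have hsa0 : (0:ℝ) < Real.sqrt a := Real.sqrt_pos.mpr ha0
  have hsd0 : (0:ℝ) < Real.sqrt d := Real.sqrt_pos.mpr hd0
  have had0 : (0:ℝ) < a * d := mul_pos ha0 hd0
  have hsad0 : (0:ℝ) < Real.sqrt (a*d) := Real.sqrt_pos.mpr had0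
  -- inner product facts
  have hkk : (inner ℂ k k : ℂ) = (a:ℂ) := by
    rw [inner_self_eq_norm_sq_to_K, ha]; norm_cast
  have hk'k' : (inner ℂ k' k' : ℂ) = (b:ℂ) := by
    rw [inner_self_eq_norm_sq_to_K, hb]; norm_cast
  have hk'k : (inner ℂ k' k : ℂ) = (starRingEnd ℂ) c := by
    rw [hc, inner_conj_symm]
  -- norm of e
  have he1 : ‖e‖ = 1 := by
    rw [he, norm_smul, norm_inv, Complex.norm_real, Real.norm_of_nonneg hsa0.le, hsa,
      inv_mul_cancel₀ (by rw [← hsa] at *; exact hsa0.ne')]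
  -- inner g g where g = a•k'-c•k
  have hgg : (inner ℂ ((a : ℂ) • k' - c • k) ((a : ℂ) • k' - c • k) : ℂ) = ((a*d : ℝ) : ℂ) := by
    simp only [inner_sub_left, inner_sub_right, inner_smul_left, inner_smul_right,
      hkk, hk'k', hc.symm, hk'k, Complex.conj_ofReal, hd]
    have hcc : (starRingEnd ℂ) c * c = ((‖c‖ : ℝ) : ℂ)^2 := by
      rw [mul_comm, Complex.mul_conj, Complex.normSq_eq_norm_sq]; push_cast; ring
    push_cast
    linear_combination (-(a:ℂ)) * hcc
  have hgnorm : ‖(a : ℂ) • k' - c • k‖ = Real.sqrt (a*d) := by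
    have := norm_eq_sqrt_re_inner (𝕜 := ℂ) ((a : ℂ) • k' - c • k)
    rw [this, hgg]; simp
  have hf1 : ‖f‖ = 1 := by
    rw [hf, norm_smul, norm_inv, Complex.norm_real, Real.norm_of_nonneg hsad0.le, hgnorm,
      inv_mul_cancel₀ hsad0.ne']
  have hef : (inner ℂ e f : ℂ) = 0 := by
    rw [he, hf]
    simp only [inner_smul_left, inner_smul_right, inner_sub_right, hkk, hc.symm,
      Complex.conj_ofReal]
    ring
  -- adjoint actions
  have hMe : ContinuousLinearMap.adjoint M e = (starRingEnd ℂ) z • e := by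
    rw [he, map_smul, hMk, smul_comm]
  have hkeq : k = ((Real.sqrt a : ℝ) : ℂ) • e := by
    rw [he, smul_inv_smul₀ (by exact_mod_cast hsa0.ne')]
  have hcoeff : (((Real.sqrt (a*d) : ℝ) : ℂ))⁻¹ * ((a:ℂ) * ((Real.sqrt a : ℝ) : ℂ))
      = (a : ℂ) / ((Real.sqrt d : ℝ) : ℂ) := by
    have hr : ((Real.sqrt (a*d)))⁻¹ * (a * Real.sqrt a) = a / Real.sqrt d := by
      rw [Real.sqrt_mul ha0.le]
      field_simp
    calc (((Real.sqrt (a*d) : ℝ) : ℂ))⁻¹ * ((a:ℂ) * ((Real.sqrt a : ℝ) : ℂ))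
        = (((Real.sqrt (a*d))⁻¹ * (a * Real.sqrt a) : ℝ) : ℂ) := by push_cast; ring
      _ = ((a / Real.sqrt d : ℝ) : ℂ) := by rw [hr]
      _ = (a : ℂ) / ((Real.sqrt d : ℝ) : ℂ) := by push_cast; ring
  have hMf : ContinuousLinearMap.adjoint M f
      = (starRingEnd ℂ) z • f + ((a : ℂ) / ((Real.sqrt d : ℝ) : ℂ)) • e := by
    rw [hf, map_smul, map_sub, map_smul, map_smul, hMk, hMk']
    rw [hkeq, ← hcoeff]
    simp only [smul_sub, smul_add, smul_smul]
    module
  -- orthonormality in the product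
  have hl2 : 1 - ‖lam‖ ^ 2 ≥ 0 := by
    have : ‖lam‖ ^ 2 ≤ 1 := by
      nlinarith [norm_nonneg lam]
    linarith
  have hn1 : ‖h1‖^2 = 1 := by
    rw [hh1, WithLp.prod_norm_sq_eq_of_L2, WithLp.equiv_symm_apply, WithLp.toLp_fst, WithLp.toLp_snd, he1]
    simp
  have hn2 : ‖h2‖^2 = 1 := by
    rw [hh2, WithLp.prod_norm_sq_eq_of_L2, WithLp.equiv_symm_apply, WithLp.toLp_fst, WithLp.toLp_snd,
      norm_smul, norm_smul, he1, hf1, mul_one, mul_one, Complex.norm_real,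
      Real.norm_of_nonneg (Real.sqrt_nonneg _), Real.sq_sqrt hl2]
    ring
  refine ⟨⟨?_, ?_, ?_⟩, ?_, ?_⟩
  · rw [← Real.sqrt_one, ← hn1, Real.sqrt_sq (norm_nonneg _)]
  · rw [← Real.sqrt_one, ← hn2, Real.sqrt_sq (norm_nonneg _)]
  · rw [hh1, hh2, WithLp.prod_inner_apply]
    simp only [WithLp.equiv_symm_apply, WithLp.ofLp_toLp, inner_zero_left,
      inner_smul_right, hef]
    ring
  · rw [hh1]
    simp only [Equiv.apply_symm_apply, map_zero, WithLp.equiv_symm_apply, WithLp.equiv_apply, WithLp.ofLp_toLp, hMe, ← WithLp.toLp_smul]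
    congr 1
    simp [Prod.smul_mk]
  · rw [hh1, hh2]
    simp only [Equiv.apply_symm_apply, map_smul, hMe, hMf, WithLp.equiv_symm_apply, WithLp.equiv_apply, WithLp.ofLp_toLp, ← WithLp.toLp_smul,
      ← WithLp.toLp_add]
    congr 1
    simp only [Prod.smul_mk, Prod.mk_add_mk, Prod.mk.injEq, smul_zero, add_zero]
    constructor
    · rw [smul_comm]
    · rw [smul_add, smul_smul, smul_smul, smul_smul, mul_div_assoc, mul_comm lam]
end

section
/- Let Ω ⊆ ℂ be a bounded open set, let z1, z2 ∈ Ω with z1 ≠ z2, let c ∈ ℂ, and let A = !![z1, 0; c, z2]. Suppose that ‖r(A)‖ ≤ 1 for every admissible rational function r = p/q for Ω with ‖r‖_Ω ≤ 1 and p.eval z1 = 0 (equivalently, r(z1) = 0). Then ‖r(A)‖ ≤ 1 for every admissible rational function r for Ω with ‖r‖_Ω ≤ 1. -/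
/-- The operator norm (on the Euclidean space `ℂ²`) of the value of the rational
function `p/q` at the `2 × 2` matrix `A`. -/
noncomputable def ratNormAt (A : Matrix (Fin 2) (Fin 2) ℂ) (p q : Polynomial ℂ) : ℝ :=
  ‖Matrix.toEuclideanCLM (𝕜 := ℂ) (Polynomial.aeval A p * (Polynomial.aeval A q)⁻¹)‖

open scoped InnerProductSpace
open Polynomial

lemma mobius_vec {E : Type*} [NormedAddCommGroup E] [InnerProductSpace ℂ E]
    (α : ℂ) (hα : ‖α‖ ≤ 1) (u x : E) (h : ‖u‖ ≤ ‖x‖) :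
    ‖u + α • x‖ ≤ ‖x + (starRingEnd ℂ α) • u‖ := by
  have h1 : ‖u + α • x‖ ^ 2 ≤ ‖x + (starRingEnd ℂ α) • u‖ ^ 2 := by
    rw [norm_add_sq (𝕜 := ℂ), norm_add_sq (𝕜 := ℂ)]
    have e1 : ⟪u, α • x⟫_ℂ = α * ⟪u, x⟫_ℂ := inner_smul_right _ _ _
    have e2 : ⟪x, (starRingEnd ℂ α) • u⟫_ℂ = (starRingEnd ℂ α) * ⟪x, u⟫_ℂ :=
      inner_smul_right _ _ _
    have e3 : ⟪x, u⟫_ℂ = starRingEnd ℂ ⟪u, x⟫_ℂ := (inner_conj_symm x u).symm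
    have e4 : RCLike.re ⟪x, (starRingEnd ℂ α) • u⟫_ℂ = RCLike.re ⟪u, α • x⟫_ℂ := by
      rw [e1, e2, e3, ← map_mul]
      exact Complex.conj_re _
    rw [e4, norm_smul, norm_smul]
    have hn := norm_nonneg u
    have hn2 := norm_nonneg x
    have hα0 := norm_nonneg α
    simp only [RCLike.norm_conj]
    have h2 : ‖u‖ ^ 2 ≤ ‖x‖ ^ 2 := pow_le_pow_left₀ hn h 2
    have h3 : ‖α‖ ^ 2 ≤ 1 := by nlinarith
    nlinarith [mul_nonneg (sub_nonneg.2 h3) (sub_nonneg.2 h2)]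
  nlinarith [norm_nonneg (u + α • x), norm_nonneg (x + (starRingEnd ℂ α) • u)]

lemma mobius_scalar (γ x y : ℂ) (hγ : ‖γ‖ ≤ 1) (h : ‖x‖ ≤ ‖y‖) :
    ‖x - γ * y‖ ≤ ‖y - starRingEnd ℂ γ * x‖ := by
  have := mobius_vec (E := ℂ) (-γ) (by simpa using hγ) x y (by simpa using h)
  simpa [sub_eq_add_neg, smul_eq_mul, neg_mul, map_neg] using this

lemma aeval_tri (z1 z2 c : ℂ) (r : Polynomial ℂ) :
    ∃ e, Polynomial.aeval (!![z1, 0; c, z2]) r = !![r.eval z1, 0; e, r.eval z2] := by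
  induction r using Polynomial.induction_on with
  | C a =>
    refine ⟨0, ?_⟩
    ext i j
    fin_cases i <;> fin_cases j <;>
      simp [Polynomial.aeval_C, Matrix.algebraMap_matrix_apply, Matrix.one_apply]
  | add p q hp hq =>
    obtain ⟨e, he⟩ := hp
    obtain ⟨f, hf⟩ := hq
    refine ⟨e + f, ?_⟩
    rw [map_add, he, hf]
    ext i j
    fin_cases i <;> fin_cases j <;> simp
  | monomial n a hn =>
    obtain ⟨e, he⟩ := hn
    refine ⟨e * z1 + Polynomial.eval z2 (C a * X ^ n) * c, ?_⟩
    have hm : C a * X ^ (n + 1) = C a * X ^ n * X := by ring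
    have h1 : Polynomial.eval z1 (C a * X ^ n * X) =
        Polynomial.eval z1 (C a * X ^ n) * z1 := by simp
    have h2 : Polynomial.eval z2 (C a * X ^ n * X) =
        Polynomial.eval z2 (C a * X ^ n) * z2 := by simp
    rw [hm, map_mul, he, Polynomial.aeval_X, h1, h2]
    generalize Polynomial.eval z1 (C a * X ^ n) = u at *
    generalize Polynomial.eval z2 (C a * X ^ n) = v at *
    ext i j
    fin_cases i <;> fin_cases j <;>
      simp [Matrix.mul_apply, Fin.sum_univ_two]

lemma clm_bound {T R : EuclideanSpace ℂ (Fin 2) →L[ℂ] EuclideanSpace ℂ (Fin 2)} {α : ℂ}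
    (hα : ‖α‖ < 1) (hT : ‖T‖ ≤ 1)
    (hid : R * (1 + (starRingEnd ℂ α) • T) = T + α • 1) : ‖R‖ ≤ 1 := by
  have hnorm : ‖-((starRingEnd ℂ α) • T)‖ < 1 := by
    rw [norm_neg]
    have hns : ‖(starRingEnd ℂ α) • T‖ = ‖α‖ * ‖T‖ := by
      rw [show ‖(starRingEnd ℂ α) • T‖ = ‖starRingEnd ℂ α‖ * ‖T‖ from
        norm_smul (starRingEnd ℂ α) T, RCLike.norm_conj]
    rw [hns]
    calc ‖α‖ * ‖T‖ ≤ ‖α‖ * 1 := by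
          exact mul_le_mul_of_nonneg_left hT (norm_nonneg _)
      _ < 1 := by simpa using hα
  set u : (EuclideanSpace ℂ (Fin 2) →L[ℂ] EuclideanSpace ℂ (Fin 2))ˣ :=
    Units.oneSub _ hnorm with hu
  have huval : (u : EuclideanSpace ℂ (Fin 2) →L[ℂ] EuclideanSpace ℂ (Fin 2))
      = 1 + (starRingEnd ℂ α) • T := by
    rw [hu]; simp [Units.oneSub, sub_neg_eq_add]
  refine R.opNorm_le_bound zero_le_one (fun y => ?_)
  obtain ⟨x, hx⟩ : ∃ x, (1 + (starRingEnd ℂ α) • T) x = y := by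
    refine ⟨(↑u⁻¹ : EuclideanSpace ℂ (Fin 2) →L[ℂ] EuclideanSpace ℂ (Fin 2)) y, ?_⟩
    rw [← huval]
    have : (↑u * ↑u⁻¹ : EuclideanSpace ℂ (Fin 2) →L[ℂ] EuclideanSpace ℂ (Fin 2)) = 1 :=
      u.mul_inv
    calc (↑u : EuclideanSpace ℂ (Fin 2) →L[ℂ] EuclideanSpace ℂ (Fin 2))
          ((↑u⁻¹ : EuclideanSpace ℂ (Fin 2) →L[ℂ] EuclideanSpace ℂ (Fin 2)) y)
        = (↑u * ↑u⁻¹ : EuclideanSpace ℂ (Fin 2) →L[ℂ] EuclideanSpace ℂ (Fin 2)) y := rfl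
      _ = y := by rw [this]; rfl
  rw [← hx]
  have h1 : R ((1 + (starRingEnd ℂ α) • T) x) = (R * (1 + (starRingEnd ℂ α) • T)) x := rfl
  rw [h1, hid]
  have h2 : (T + α • 1) x = T x + α • x := by
    simp [ContinuousLinearMap.add_apply]
  have h3 : (1 + (starRingEnd ℂ α) • T) x = x + (starRingEnd ℂ α) • T x := by
    simp [ContinuousLinearMap.add_apply]
  rw [h2, h3, one_mul]
  have hTx : ‖T x‖ ≤ ‖x‖ := by
    calc ‖T x‖ ≤ ‖T‖ * ‖x‖ := T.le_opNorm x
      _ ≤ 1 * ‖x‖ := mul_le_mul_of_nonneg_right hT (norm_nonneg _)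
      _ = ‖x‖ := one_mul _
  exact mobius_vec α hα.le (T x) x hTx

lemma key (Ω : Set ℂ) (z1 z2 : ℂ) (hz1 : z1 ∈ closure Ω) (hz2 : z2 ∈ closure Ω) (c : ℂ)
    (A : Matrix (Fin 2) (Fin 2) ℂ) (hA : A = !![z1, 0; c, z2])
    (hyp : ∀ p q : Polynomial ℂ,
      (∀ w ∈ closure Ω, q.eval w ≠ 0) →
      (∀ w ∈ closure Ω, ‖p.eval w / q.eval w‖ ≤ 1) →
      p.eval z1 = 0 → ratNormAt A p q ≤ 1)
    (p q : Polynomial ℂ)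
    (hq : ∀ w ∈ closure Ω, q.eval w ≠ 0)
    (hb : ∀ w ∈ closure Ω, ‖p.eval w / q.eval w‖ ≤ 1)
    (hlt : ‖p.eval z1 / q.eval z1‖ < 1) :
    ratNormAt A p q ≤ 1 := by
  have hq1 : q.eval z1 ≠ 0 := hq z1 hz1
  have hq2 : q.eval z2 ≠ 0 := hq z2 hz2
  set α : ℂ := p.eval z1 / q.eval z1 with hαdef
  have hαlt : ‖α‖ < 1 := hlt
  set p' : Polynomial ℂ := p - Polynomial.C α * q with hp'def
  set q' : Polynomial ℂ := q - Polynomial.C (starRingEnd ℂ α) * p with hq'def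
  have habs : ∀ w ∈ closure Ω, ‖p.eval w‖ ≤ ‖q.eval w‖ := by
    intro w hw
    have h := hb w hw
    rw [norm_div, div_le_one (norm_pos_iff.mpr (hq w hw))] at h
    linarith
  have hq'w : ∀ w ∈ closure Ω, q'.eval w ≠ 0 := by
    intro w hw
    have hpq := habs w hw
    have hqpos : 0 < ‖q.eval w‖ := norm_pos_iff.mpr (hq w hw)
    simp only [hq'def, Polynomial.eval_sub, Polynomial.eval_mul, Polynomial.eval_C]
    intro hcon
    rw [sub_eq_zero] at hcon
    have : ‖q.eval w‖ = ‖α‖ * ‖p.eval w‖ := by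
      rw [hcon, norm_mul, RCLike.norm_conj]
    nlinarith [norm_nonneg (p.eval w), norm_nonneg α]
  have hb' : ∀ w ∈ closure Ω, ‖p'.eval w / q'.eval w‖ ≤ 1 := by
    intro w hw
    have hnum : ‖p'.eval w‖ ≤ ‖q'.eval w‖ := by
      simp only [hp'def, hq'def, Polynomial.eval_sub, Polynomial.eval_mul, Polynomial.eval_C]
      exact mobius_scalar α (p.eval w) (q.eval w) hαlt.le (habs w hw)
    rw [norm_div, div_le_one (norm_pos_iff.mpr (hq'w w hw))]
    exact hnum
  have hp'z1 : p'.eval z1 = 0 := by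
    simp only [hp'def, Polynomial.eval_sub, Polynomial.eval_mul, Polynomial.eval_C, hαdef]
    field_simp
    ring
  have hS := hyp p' q' hq'w hb' hp'z1
  -- matrix side
  set P : Matrix (Fin 2) (Fin 2) ℂ := Polynomial.aeval A p with hP
  set Q : Matrix (Fin 2) (Fin 2) ℂ := Polynomial.aeval A q with hQ
  set Q' : Matrix (Fin 2) (Fin 2) ℂ := Polynomial.aeval A q' with hQ'
  have hP'eq : Polynomial.aeval A p' = P - α • Q := by
    rw [hp'def, map_sub, map_mul, Polynomial.aeval_C, ← Algebra.smul_def]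
  have hQ'eq : Q' = Q - (starRingEnd ℂ α) • P := by
    rw [hQ', hq'def, map_sub, map_mul, Polynomial.aeval_C, ← Algebra.smul_def]
  have hdet : ∀ (r : Polynomial ℂ), r.eval z1 ≠ 0 → r.eval z2 ≠ 0 →
      IsUnit (Polynomial.aeval A r).det := by
    intro r h1 h2
    obtain ⟨e, he⟩ := aeval_tri z1 z2 c r
    rw [hA, he, Matrix.det_fin_two_of]
    simp only [zero_mul, sub_zero]
    exact (mul_ne_zero h1 h2).isUnit
  have hdQ : IsUnit Q.det := hdet q hq1 hq2
  have hdQ' : IsUnit Q'.det := hdet q' (hq'w z1 hz1) (hq'w z2 hz2)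
  -- the matrix identity
  set S : Matrix (Fin 2) (Fin 2) ℂ := Polynomial.aeval A p' * Q'⁻¹ with hSdef
  have hQ'inv : Q' * Q'⁻¹ = 1 := Matrix.mul_nonsing_inv _ hdQ'
  have hQinv : Q⁻¹ * Q = 1 := Matrix.nonsing_inv_mul _ hdQ
  set s : ℂ := 1 - α * starRingEnd ℂ α with hsdef
  have c1 : S + α • (1 : Matrix (Fin 2) (Fin 2) ℂ) = (s • P) * Q'⁻¹ := by
    have e : s • P = (P - α • Q) + α • Q' := by
      rw [hQ'eq, hsdef]; module
    rw [hSdef, hP'eq, e, Matrix.add_mul, Matrix.smul_mul, hQ'inv]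
  have c2 : (1 : Matrix (Fin 2) (Fin 2) ℂ) + (starRingEnd ℂ α) • S = (s • Q) * Q'⁻¹ := by
    have e : s • Q = Q' + (starRingEnd ℂ α) • (P - α • Q) := by
      rw [hQ'eq, hsdef]; module
    rw [hSdef, hP'eq, e, Matrix.add_mul, Matrix.smul_mul, hQ'inv]
  have c3 : (P * Q⁻¹) * ((s • Q) * Q'⁻¹) = (s • P) * Q'⁻¹ := by
    rw [Matrix.smul_mul, Matrix.mul_smul, Matrix.smul_mul]
    congr 1
    calc P * Q⁻¹ * (Q * Q'⁻¹) = P * (Q⁻¹ * Q) * Q'⁻¹ := by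
          rw [Matrix.mul_assoc, Matrix.mul_assoc, Matrix.mul_assoc]
      _ = P * Q'⁻¹ := by rw [hQinv, Matrix.mul_one]
  have hmat : (P * Q⁻¹) * ((1 : Matrix (Fin 2) (Fin 2) ℂ) + (starRingEnd ℂ α) • S)
      = S + α • (1 : Matrix (Fin 2) (Fin 2) ℂ) := by
    rw [c2, c3, ← c1]
  -- transfer to CLM
  set φ := Matrix.toEuclideanCLM (𝕜 := ℂ) (n := Fin 2) with hφ
  have hid : φ (P * Q⁻¹) * (1 + (starRingEnd ℂ α) • φ S) = φ S + α • 1 := by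
    have := congrArg φ hmat
    simpa only [map_mul, map_add, map_smul, map_one] using this
  have hT : ‖φ S‖ ≤ 1 := hS
  have hα' : ‖α‖ < 1 := hαlt
  exact clm_bound hα' hT hid

set_option maxHeartbeats 1000000 in
set_option synthInstance.maxHeartbeats 400000 in
theorem stmt_7 (Ω : Set ℂ) (hΩo : IsOpen Ω) (hΩb : Bornology.IsBounded Ω)
    (z1 z2 : ℂ) (hz1 : z1 ∈ Ω) (hz2 : z2 ∈ Ω) (hz : z1 ≠ z2) (c : ℂ)
    (A : Matrix (Fin 2) (Fin 2) ℂ) (hA : A = !![z1, 0; c, z2])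
    (hyp : ∀ p q : Polynomial ℂ,
      (∀ w ∈ closure Ω, q.eval w ≠ 0) →
      (∀ w ∈ closure Ω, ‖p.eval w / q.eval w‖ ≤ 1) →
      p.eval z1 = 0 → ratNormAt A p q ≤ 1) :
    ∀ p q : Polynomial ℂ,
      (∀ w ∈ closure Ω, q.eval w ≠ 0) →
      (∀ w ∈ closure Ω, ‖p.eval w / q.eval w‖ ≤ 1) →
      ratNormAt A p q ≤ 1 := by
  intro p q hq hb
  have hcl1 : z1 ∈ closure Ω := subset_closure hz1
  have hcl2 : z2 ∈ closure Ω := subset_closure hz2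
  by_contra hcon
  push_neg at hcon
  set N : ℝ := ratNormAt A p q with hN
  have hN1 : 1 < N := hcon
  have hNpos : 0 < N := lt_trans one_pos hN1
  set t : ℝ := (1 + N) / (2 * N) with htdef
  have ht0 : 0 < t := by positivity
  have ht1 : t < 1 := by
    rw [htdef, div_lt_one (by positivity)]
    linarith
  -- the scaled rational function
  have habs_t : ‖(t : ℂ)‖ = t := by
    rw [Complex.norm_real, Real.norm_eq_abs, abs_of_pos ht0]
  have hbound : ∀ w ∈ closure Ω,
      ‖(Polynomial.C (t:ℂ) * p).eval w / q.eval w‖ ≤ 1 := by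
    intro w hw
    rw [Polynomial.eval_mul, Polynomial.eval_C, mul_div_assoc, norm_mul, habs_t]
    calc t * ‖p.eval w / q.eval w‖ ≤ t * 1 :=
          mul_le_mul_of_nonneg_left (hb w hw) ht0.le
      _ ≤ 1 := by linarith
  have hstrict : ‖(Polynomial.C (t:ℂ) * p).eval z1 / q.eval z1‖ < 1 := by
    rw [Polynomial.eval_mul, Polynomial.eval_C, mul_div_assoc, norm_mul, habs_t]
    calc t * ‖p.eval z1 / q.eval z1‖ ≤ t * 1 :=
          mul_le_mul_of_nonneg_left (hb z1 hcl1) ht0.le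
      _ < 1 := by linarith
  have hkey := key Ω z1 z2 hcl1 hcl2 c A hA hyp (Polynomial.C (t:ℂ) * p) q hq hbound hstrict
  -- ratNormAt scales
  have hscale : ratNormAt A (Polynomial.C (t:ℂ) * p) q = t * N := by
    unfold ratNormAt
    have e1 : Polynomial.aeval A (Polynomial.C (t:ℂ) * p) = (t:ℂ) • Polynomial.aeval A p := by
      rw [map_mul, Polynomial.aeval_C, ← Algebra.smul_def]
    rw [e1, Matrix.smul_mul, map_smul]
    rw [norm_smul ((t:ℂ)) (Matrix.toEuclideanCLM (𝕜 := ℂ)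
        (Polynomial.aeval A p * (Polynomial.aeval A q)⁻¹))]
    rw [Complex.norm_real, Real.norm_eq_abs, abs_of_pos ht0]
    rfl
  rw [hscale, htdef] at hkey
  have : (1 + N) / (2 * N) * N = (1 + N) / 2 := by field_simp
  rw [this] at hkey
  linarith
end

section
/- Let Ω ⊆ ℂ be a bounded open set and let z1, z2 ∈ Ω with z1 ≠ z2. Define s_Ω(z1, z2) = sSup { |p(z1)/q(z1)|² : (p, q) an admissible rational function for Ω with ‖p/q‖_Ω ≤ 1 and p.eval z2 = 0 }. Let s be a real number with s > 0 and s² = 1/s_Ω(z1, z2) − 1, let μ ∈ ℂ, and let A = !![z1, 0; (s * μ) * (z1 − z2), z2]. Then ‖r(A)‖ ≤ 1 for every admissible rational function r for Ω with ‖r‖_Ω ≤ 1 if and only if |μ| ≤ 1. -/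
open Complex Matrix Polynomial
set_option maxHeartbeats 1000000


noncomputable def vec2 (x0 x1 : ℂ) : EuclideanSpace ℂ (Fin 2) :=
  (WithLp.equiv 2 _).symm ![x0, x1]

theorem vec2_apply0 (x0 x1 : ℂ) : vec2 x0 x1 0 = x0 := rfl
theorem vec2_apply1 (x0 x1 : ℂ) : vec2 x0 x1 1 = x1 := rfl

theorem apply_eq (M : Matrix (Fin 2) (Fin 2) ℂ) (x : EuclideanSpace ℂ (Fin 2)) (i : Fin 2) :
    (Matrix.toEuclideanCLM (𝕜 := ℂ) M x) i = M i 0 * x 0 + M i 1 * x 1 := by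
  have : (Matrix.toEuclideanCLM (𝕜 := ℂ) M x) i = (M *ᵥ (WithLp.equiv _ _ x)) i := rfl
  rw [this, Matrix.mulVec, dotProduct, Fin.sum_univ_two]; rfl

theorem norm_sq_eq (x : EuclideanSpace ℂ (Fin 2)) :
    ‖x‖^2 = ‖x 0‖^2 + ‖x 1‖^2 := by
  rw [EuclideanSpace.norm_eq, Real.sq_sqrt (by positivity)]
  simp [Fin.sum_univ_two]

theorem norm_le_iff_sq (M : Matrix (Fin 2) (Fin 2) ℂ) :
    ‖Matrix.toEuclideanCLM (𝕜 := ℂ) M‖ ≤ 1 ↔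
      ∀ x0 x1 : ℂ, ‖M 0 0 * x0 + M 0 1 * x1‖^2 + ‖M 1 0 * x0 + M 1 1 * x1‖^2
        ≤ ‖x0‖^2 + ‖x1‖^2 := by
  rw [ContinuousLinearMap.opNorm_le_iff zero_le_one]
  constructor
  · intro h x0 x1
    have := h (vec2 x0 x1)
    rw [one_mul] at this
    have h2 := pow_le_pow_left₀ (norm_nonneg _) this 2
    rw [norm_sq_eq, norm_sq_eq] at h2
    simpa [apply_eq, vec2_apply0, vec2_apply1] using h2
  · intro h x
    rw [one_mul]
    have h2 := h (x 0) (x 1)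
    have e0 : ‖Matrix.toEuclideanCLM (𝕜 := ℂ) M x‖^2 ≤ ‖x‖^2 := by
      rw [norm_sq_eq, norm_sq_eq]
      simpa [apply_eq] using h2
    nlinarith [norm_nonneg (Matrix.toEuclideanCLM (𝕜 := ℂ) M x), norm_nonneg x]

theorem aux_back (p q r u v : ℝ) (hp : 0 ≤ p) (hq : 0 ≤ q) (hr : 0 ≤ r) (hu : 0 ≤ u) (hv : 0 ≤ v)
    (hp1 : p ≤ 1) (hq1 : q ≤ 1) (key : r^2 ≤ (1-p^2)*(1-q^2)) :
    p^2*u^2 + (r*u + q*v)^2 ≤ u^2 + v^2 := by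
  rcases hq1.eq_or_lt with h|h
  · subst h
    have h2 : r^2 = 0 := le_antisymm (by nlinarith) (sq_nonneg r)
    have hr0 : r = 0 := pow_eq_zero_iff (n := 2) two_ne_zero |>.1 h2
    rw [hr0]
    nlinarith [mul_nonneg (mul_nonneg (sub_nonneg.2 hp1) (by linarith : (0:ℝ) ≤ 1 + p)) (sq_nonneg u)]
  · have hb : 0 < 1 - q^2 := by nlinarith
    nlinarith [sq_nonneg ((1-q^2)*v - r*q*u), mul_nonneg (mul_nonneg hr hq) (mul_nonneg hu hv),
      mul_pos hb hb, sq_nonneg u, mul_nonneg hb.le (sq_nonneg u)]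

theorem aux_fwd (α β K : ℝ) (ha : 0 ≤ α) (hb : 0 ≤ β) (hK : 0 ≤ K)
    (h1 : 2*K*K*α ≤ α*K^2 + β*α^2) (h2 : 2*K*β*K ≤ α*β^2 + β*K^2) (h3 : 2*K*1*K ≤ α*1^2 + β*K^2) :
    K^2 ≤ α*β := by
  rcases ha.eq_or_lt with h|h
  · rcases hb.eq_or_lt with h'|h'
    · nlinarith
    · nlinarith
  · nlinarith


theorem normChar (a b t : ℂ) :
    ‖Matrix.toEuclideanCLM (𝕜 := ℂ) !![a,0;t,b]‖ ≤ 1 ↔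
      (‖a‖ ≤ 1 ∧ ‖b‖ ≤ 1 ∧
        ‖t‖^2 ≤ (1 - ‖a‖^2)*(1 - ‖b‖^2)) := by
  rw [norm_le_iff_sq]
  have H2 : ∀ x0 x1 : ℂ,
      ‖(!![a,0;t,b] : Matrix (Fin 2) (Fin 2) ℂ) 0 0 * x0 + (!![a,0;t,b] : Matrix (Fin 2) (Fin 2) ℂ) 0 1 * x1‖^2
      + ‖(!![a,0;t,b] : Matrix (Fin 2) (Fin 2) ℂ) 1 0 * x0 + (!![a,0;t,b] : Matrix (Fin 2) (Fin 2) ℂ) 1 1 * x1‖^2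
      = ‖a * x0‖^2 + ‖t * x0 + b * x1‖^2 := by
    intro x0 x1
    norm_num [Matrix.cons_val_zero, Matrix.cons_val_one, Matrix.head_cons]
  simp only [H2]
  constructor
  · intro H
    have h10 : ‖a‖^2 + ‖t‖^2 ≤ 1 := by
      have := H 1 0
      simpa using this
    have h01 : ‖b‖^2 ≤ 1 := by
      have := H 0 1
      simpa using this
    have ha : ‖a‖ ≤ 1 := by nlinarith [norm_nonneg a, sq_nonneg (‖t‖)]
    have hb : ‖b‖ ≤ 1 := by nlinarith [norm_nonneg b]
    refine ⟨ha, hb, ?_⟩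
    by_cases htz : t = 0
    · simp only [htz, norm_zero]
      have : (0:ℝ) ≤ (1 - ‖a‖^2)*(1 - ‖b‖^2) := by
        apply mul_nonneg <;> nlinarith [norm_nonneg a, norm_nonneg b]
      simpa using this
    by_cases hbz : b = 0
    · simp only [hbz, norm_zero]
      nlinarith
    have ht0 : (0:ℝ) < ‖t‖ := norm_pos_iff.2 htz
    have hb0 : (0:ℝ) < ‖b‖ := norm_pos_iff.2 hbz
    have H' : ∀ u v : ℝ, 0 ≤ u → 0 ≤ v →
        ‖a‖^2*u^2 + (‖t‖*u + ‖b‖*v)^2 ≤ u^2 + v^2 := by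
      intro u v hu hv
      have hkey : t * (u:ℂ) + b * ((v:ℂ) * (starRingEnd ℂ b * t / ((‖starRingEnd ℂ b * t‖ : ℝ) : ℂ)))
          = (((‖t‖*u + ‖b‖*v : ℝ)) : ℂ) * (t / ((‖t‖ : ℝ) : ℂ)) := by
        have h1 : ((‖starRingEnd ℂ b * t‖ : ℝ) : ℂ)
            = ((‖b‖ : ℝ) : ℂ) * ((‖t‖ : ℝ) : ℂ) := by
          rw [norm_mul, Complex.norm_conj]; push_cast; ring
        have h2 : b * starRingEnd ℂ b = (((‖b‖)^2 : ℝ) : ℂ) := by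
          rw [Complex.mul_conj, Complex.sq_norm]
        have hbc : ((‖b‖ : ℝ) : ℂ) ≠ 0 := by
          simpa using hb0.ne'
        have htc : ((‖t‖ : ℝ) : ℂ) ≠ 0 := by
          simpa using ht0.ne'
        have h2' : b * starRingEnd ℂ b = ((‖b‖ : ℝ) : ℂ) * ((‖b‖ : ℝ) : ℂ) := by
          rw [Complex.mul_conj, Complex.normSq_eq_norm_sq]; push_cast; ring
        rw [h1]
        field_simp
        push_cast
        ring_nf
        linear_combination (v:ℂ) * h2'
      have := H (u:ℂ) ((v:ℂ) * (starRingEnd ℂ b * t / ((‖starRingEnd ℂ b * t‖ : ℝ) : ℂ)))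
      rw [hkey] at this
      have hx1 : ‖(v:ℂ) * (starRingEnd ℂ b * t / ((‖starRingEnd ℂ b * t‖ : ℝ) : ℂ))‖ = v := by
        rw [norm_mul, norm_div, Complex.norm_real, Real.norm_eq_abs, Complex.norm_real, Real.norm_eq_abs]
        rw [_root_.abs_of_nonneg (norm_nonneg _), div_self (show (‖starRingEnd ℂ b * t‖) ≠ 0 by simp [hbz, htz]), _root_.abs_of_nonneg hv, mul_one]
      have hax : ‖a * (u:ℂ)‖ = ‖a‖ * u := by
        rw [norm_mul, Complex.norm_real, Real.norm_eq_abs, _root_.abs_of_nonneg hu]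
      have htx : ‖(((‖t‖*u + ‖b‖*v : ℝ)) : ℂ) * (t / ((‖t‖ : ℝ) : ℂ))‖
          = ‖t‖*u + ‖b‖*v := by
        rw [norm_mul, norm_div, Complex.norm_real, Real.norm_eq_abs, Complex.norm_real, Real.norm_eq_abs]
        rw [_root_.abs_of_nonneg (norm_nonneg _), div_self ht0.ne', mul_one]
        apply _root_.abs_of_nonneg
        have := mul_nonneg (norm_nonneg t) hu
        have := mul_nonneg (norm_nonneg b) hv
        linarith
      rw [hax, htx, hx1, Complex.norm_real, Real.norm_eq_abs, _root_.abs_of_nonneg hu] at this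
      calc ‖a‖^2*u^2 + (‖t‖*u + ‖b‖*v)^2
          = (‖a‖ * u)^2 + (‖t‖*u + ‖b‖*v)^2 := by ring
        _ ≤ u^2 + v^2 := this
    set α := 1 - ‖a‖^2 - ‖t‖^2 with hαdef
    set β := 1 - ‖b‖^2 with hβdef
    set K := ‖t‖ * ‖b‖ with hKdef
    have hα : 0 ≤ α := by simp only [hαdef]; linarith
    have hβ : 0 ≤ β := by simp only [hβdef]; linarith
    have hK : 0 ≤ K := mul_nonneg (norm_nonneg t) (norm_nonneg b)
    have H'' : ∀ u v : ℝ, 0 ≤ u → 0 ≤ v → 2*K*u*v ≤ α*u^2 + β*v^2 := by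
      intro u v hu hv
      have := H' u v hu hv
      simp only [hαdef, hβdef, hKdef]
      nlinarith [this]
    have kk := aux_fwd α β K hα hβ hK (H'' K α hK hα) (H'' β K hβ hK) (H'' 1 K zero_le_one hK)
    simp only [hαdef, hβdef, hKdef] at kk
    nlinarith [kk]
  · rintro ⟨ha, hb, key⟩ x0 x1
    have tri : ‖t*x0+b*x1‖ ≤ ‖t‖ * ‖x0‖ + ‖b‖ * ‖x1‖ := by
      calc ‖t*x0+b*x1‖ ≤ ‖t*x0‖ + ‖b*x1‖ := norm_add_le _ _
        _ = _ := by rw [norm_mul, norm_mul]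
    have tri2 : ‖t*x0+b*x1‖^2 ≤ (‖t‖ * ‖x0‖ + ‖b‖ * ‖x1‖)^2 :=
      pow_le_pow_left₀ (norm_nonneg _) tri 2
    have hmain := aux_back (‖a‖) (‖b‖) (‖t‖)
      (‖x0‖) (‖x1‖) (norm_nonneg a) (norm_nonneg b)
      (norm_nonneg t) (norm_nonneg x0) (norm_nonneg x1) ha hb key
    have hax : ‖a*x0‖^2 = ‖a‖^2 * ‖x0‖^2 := by
      rw [norm_mul, mul_pow]
    nlinarith [tri2, hmain]

theorem aeval_tri_s9 (z1 z2 c : ℂ) (hz : z1 - z2 ≠ 0) (p : Polynomial ℂ) :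
    Polynomial.aeval (!![z1,0;c,z2]) p =
      !![p.eval z1, 0; c * (p.eval z1 - p.eval z2) / (z1 - z2), p.eval z2] := by
  induction p using Polynomial.induction_on with
  | C a =>
      ext i j
      fin_cases i <;> fin_cases j <;>
        simp [Polynomial.aeval_C, Matrix.algebraMap_matrix_apply]
  | add p q hp hq =>
      rw [map_add, hp, hq]
      ext i j
      fin_cases i <;> fin_cases j <;> simp <;> field_simp <;> ring
  | monomial n a ih =>
      have e : (Polynomial.C a * Polynomial.X ^ (n+1) : Polynomial ℂ)
          = (Polynomial.C a * Polynomial.X ^ n) * Polynomial.X := by ring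
      rw [e, _root_.map_mul, ih, Polynomial.aeval_X]
      ext i j
      fin_cases i <;> fin_cases j <;>
        simp [Matrix.mul_apply, Fin.sum_univ_two] <;> field_simp <;> ring

theorem ratApply (z1 z2 c : ℂ) (hz : z1 - z2 ≠ 0) (p q : Polynomial ℂ)
    (h1 : q.eval z1 ≠ 0) (h2 : q.eval z2 ≠ 0) :
    Polynomial.aeval (!![z1,0;c,z2]) p * (Polynomial.aeval (!![z1,0;c,z2]) q)⁻¹ =
      !![p.eval z1 / q.eval z1, 0;
         c * (p.eval z1 / q.eval z1 - p.eval z2 / q.eval z2) / (z1 - z2),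
         p.eval z2 / q.eval z2] := by
  rw [aeval_tri_s9 z1 z2 c hz p, aeval_tri_s9 z1 z2 c hz q]
  have hinv : (!![q.eval z1, 0; c * (q.eval z1 - q.eval z2) / (z1 - z2), q.eval z2])⁻¹
      = !![(q.eval z1)⁻¹, 0;
           -(c * (q.eval z1 - q.eval z2) / (z1 - z2)) / (q.eval z1 * q.eval z2), (q.eval z2)⁻¹] := by
    apply Matrix.inv_eq_right_inv
    ext i j
    fin_cases i <;> fin_cases j <;>
      simp [Matrix.mul_apply, Fin.sum_univ_two, Matrix.one_apply] <;> field_simp <;> ring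
  rw [hinv]
  ext i j
  fin_cases i <;> fin_cases j <;>
    simp [Matrix.mul_apply, Fin.sum_univ_two] <;> field_simp <;> ring

theorem id2 (b P Q : ℂ) :
    ‖Q - starRingEnd ℂ b * P‖^2 - ‖P - b*Q‖^2
      = (1 - ‖b‖^2) * (‖Q‖^2 - ‖P‖^2) := by
  simp only [Complex.sq_norm, Complex.normSq_apply, Complex.sub_re, Complex.sub_im,
    Complex.mul_re, Complex.mul_im, Complex.one_re, Complex.one_im, Complex.conj_re,
    Complex.conj_im]
  ring

example (x y : ℝ) (hx : 0 ≤ x) (hy : 0 ≤ y) (h : x^2 ≤ y^2) : x ≤ y := by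
  exact (pow_le_pow_iff_left₀ hx hy two_ne_zero).1 h

theorem key_est (Ω : Set ℂ) (z1 z2 : ℂ) (hz1 : z1 ∈ Ω) (hz2 : z2 ∈ Ω)
    (sΩ : ℝ)
    (hsΩ : sΩ = sSup {x : ℝ | ∃ p q : Polynomial ℂ,
      (∀ w ∈ closure Ω, q.eval w ≠ 0) ∧
      (∀ w ∈ closure Ω, ‖p.eval w / q.eval w‖ ≤ 1) ∧
      p.eval z2 = 0 ∧ x = ‖p.eval z1 / q.eval z1‖ ^ 2})
    (p q : Polynomial ℂ)
    (hq : ∀ w ∈ closure Ω, q.eval w ≠ 0)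
    (hsup : ∀ w ∈ closure Ω, ‖p.eval w / q.eval w‖ ≤ 1)
    (hblt : ‖p.eval z2 / q.eval z2‖ < 1) :
    (1 - sΩ) * (‖p.eval z1 / q.eval z1 - p.eval z2 / q.eval z2‖)^2
      ≤ sΩ * ((1 - ‖p.eval z1 / q.eval z1‖^2)
        * (1 - ‖p.eval z2 / q.eval z2‖^2)) := by
  have hz1c : z1 ∈ closure Ω := subset_closure hz1
  have hz2c : z2 ∈ closure Ω := subset_closure hz2
  have hq1 : q.eval z1 ≠ 0 := hq z1 hz1c
  have hq2 : q.eval z2 ≠ 0 := hq z2 hz2c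
  set a : ℂ := p.eval z1 / q.eval z1 with hadef
  set b : ℂ := p.eval z2 / q.eval z2 with hbdef
  have ha1 : ‖a‖ ≤ 1 := hsup z1 hz1c
  have hpq : ∀ w ∈ closure Ω, ‖p.eval w‖ ≤ ‖q.eval w‖ := by
    intro w hw
    have := hsup w hw
    rw [norm_div, div_le_one (norm_pos_iff.2 (hq w hw))] at this
    exact this
  set p' : Polynomial ℂ := p - Polynomial.C b * q with hp'def
  set q' : Polynomial ℂ := q - Polynomial.C (starRingEnd ℂ b) * p with hq'def
  have hevp' : ∀ w, p'.eval w = p.eval w - b * q.eval w := by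
    intro w; simp [hp'def]
  have hevq' : ∀ w, q'.eval w = q.eval w - starRingEnd ℂ b * p.eval w := by
    intro w; simp [hq'def]
  have hq'ne : ∀ w ∈ closure Ω, q'.eval w ≠ 0 := by
    intro w hw h0
    rw [hevq', sub_eq_zero] at h0
    have h1 : ‖q.eval w‖ = ‖b‖ * ‖p.eval w‖ := by
      rw [h0, norm_mul, Complex.norm_conj]
    have h2 := hpq w hw
    have h3 := norm_pos_iff.2 (hq w hw)
    nlinarith [mul_le_mul_of_nonneg_left h2 (norm_nonneg b),
      mul_pos (sub_pos.2 hblt) h3]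
  have hq'sq : ∀ w ∈ closure Ω, ‖p'.eval w‖ ≤ ‖q'.eval w‖ := by
    intro w hw
    have hid := id2 b (p.eval w) (q.eval w)
    have h2 := hpq w hw
    have hb0 : ‖b‖ ≤ 1 := hblt.le
    have hsq : ‖p'.eval w‖^2 ≤ ‖q'.eval w‖^2 := by
      rw [hevp', hevq']
      have e1 : (0:ℝ) ≤ 1 - ‖b‖^2 := by nlinarith [norm_nonneg b]
      have e2 : (0:ℝ) ≤ ‖q.eval w‖^2 - ‖p.eval w‖^2 := by
        nlinarith [norm_nonneg (p.eval w), norm_nonneg (q.eval w)]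
      nlinarith [hid, mul_nonneg e1 e2]
    exact (pow_le_pow_iff_left₀ (norm_nonneg _) (norm_nonneg _) two_ne_zero).1 hsq
  have hsup' : ∀ w ∈ closure Ω, ‖p'.eval w / q'.eval w‖ ≤ 1 := by
    intro w hw
    rw [norm_div, div_le_one (norm_pos_iff.2 (hq'ne w hw))]
    exact hq'sq w hw
  have hp'z2 : p'.eval z2 = 0 := by
    rw [hevp', hbdef, sub_eq_zero]
    field_simp
  have hone : (1 : ℂ) - starRingEnd ℂ b * a ≠ 0 := by
    intro h0
    rw [sub_eq_zero] at h0
    have : ‖(starRingEnd ℂ b) * a‖ = 1 := by rw [← h0]; simp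
    rw [norm_mul, Complex.norm_conj] at this
    nlinarith [norm_nonneg a, norm_nonneg b]
  have hval : p'.eval z1 / q'.eval z1 = (a - b) / (1 - starRingEnd ℂ b * a) := by
    rw [hevp', hevq']
    rw [hadef]
    have hq'1 : q.eval z1 - starRingEnd ℂ b * p.eval z1 ≠ 0 := by
      have := hq'ne z1 hz1c
      rwa [hevq'] at this
    field_simp
  have hmem : (‖(a - b) / (1 - starRingEnd ℂ b * a)‖)^2 ∈
      {x : ℝ | ∃ p q : Polynomial ℂ,
        (∀ w ∈ closure Ω, q.eval w ≠ 0) ∧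
        (∀ w ∈ closure Ω, ‖p.eval w / q.eval w‖ ≤ 1) ∧
        p.eval z2 = 0 ∧ x = ‖p.eval z1 / q.eval z1‖ ^ 2} := by
    exact ⟨p', q', hq'ne, hsup', hp'z2, by rw [hval]⟩
  have hbdd : BddAbove {x : ℝ | ∃ p q : Polynomial ℂ,
      (∀ w ∈ closure Ω, q.eval w ≠ 0) ∧
      (∀ w ∈ closure Ω, ‖p.eval w / q.eval w‖ ≤ 1) ∧
      p.eval z2 = 0 ∧ x = ‖p.eval z1 / q.eval z1‖ ^ 2} := by
    refine ⟨1, ?_⟩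
    rintro x ⟨P, Q, hQ, hS, hP2, rfl⟩
    have := hS z1 hz1c
    nlinarith [norm_nonneg (P.eval z1 / Q.eval z1)]
  have hle : (‖(a - b) / (1 - starRingEnd ℂ b * a)‖)^2 ≤ sΩ := by
    rw [hsΩ]
    exact le_csSup hbdd hmem
  -- identity : |1 - conj b * a|^2 = |a-b|^2 + (1-|a|^2)(1-|b|^2)
  have hid := id2 b a 1
  simp only [norm_one, mul_one, one_pow] at hid
  set D : ℝ := ‖a - b‖^2 with hDdef
  set E : ℝ := (1 - ‖a‖^2) * (1 - ‖b‖^2) with hEdef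
  have hN : ‖1 - starRingEnd ℂ b * a‖^2 = D + E := by
    simp only [hDdef, hEdef]
    have : ‖a - b * 1‖^2 = ‖a - b‖^2 := by rw [mul_one]
    nlinarith [hid, this]
  have hNpos : 0 < ‖1 - starRingEnd ℂ b * a‖^2 :=
    pow_pos (norm_pos_iff.2 hone) 2
  have hratio : (‖(a - b) / (1 - starRingEnd ℂ b * a)‖)^2 = D / (D + E) := by
    rw [norm_div, div_pow, hDdef, hN]
  rw [hratio] at hle
  have hDE : 0 < D + E := by rw [← hN]; exact hNpos
  have hD : D ≤ sΩ * (D + E) := by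
    rw [div_le_iff₀ hDE] at hle
    linarith [hle]
  nlinarith [hD]


theorem eps_contra (sΩ ε Aa D : ℝ) (hsΩpos : 0 < sΩ) (hsΩlt : sΩ < 1) (hDpos : 0 < D)
    (hεpos : 0 < ε) (hεhalf : ε ≤ 1/2) (hε16 : ε ≤ (1 - sΩ)*D/16) (hAa : 0 ≤ Aa) (hAa1 : Aa ≤ 1)
    (hke : (1 - sΩ)*((1-ε)^2*D) ≤ sΩ*((1-(1-ε)^2*Aa^2)*(1-(1-ε)^2*1^2))) : False := by
  have hsq : 0 ≤ (1-ε)^2*Aa^2 := mul_nonneg (sq_nonneg _) (sq_nonneg _)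
  have e1 : (1-ε)^2 ≤ 1 := by nlinarith
  have e2 : Aa^2 ≤ 1 := by nlinarith
  have hfa : (1-ε)^2*Aa^2 ≤ 1 := by nlinarith
  have hf2 : 1 - (1-ε)^2*1^2 ≤ 2*ε := by nlinarith
  have hf2' : 0 ≤ 1 - (1-ε)^2*1^2 := by nlinarith
  have hX1 : 1-(1-ε)^2*Aa^2 ≤ 1 := by linarith
  have hX0 : 0 ≤ 1-(1-ε)^2*Aa^2 := by linarith
  have hXY : (1-(1-ε)^2*Aa^2)*(1-(1-ε)^2*1^2) ≤ 1*(2*ε) := mul_le_mul hX1 hf2 hf2' zero_le_one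
  have hXY0 : 0 ≤ (1-(1-ε)^2*Aa^2)*(1-(1-ε)^2*1^2) := mul_nonneg hX0 hf2'
  have hRHS : sΩ*((1-(1-ε)^2*Aa^2)*(1-(1-ε)^2*1^2)) ≤ 2*ε := by
    have := mul_le_mul_of_nonneg_right hsΩlt.le hXY0
    nlinarith
  have e3 : (1/4:ℝ) ≤ (1-ε)^2 := by nlinarith
  have hLHS : (1-sΩ)*D/4 ≤ (1-sΩ)*((1-ε)^2*D) := by nlinarith [mul_le_mul_of_nonneg_right e3 hDpos.le, mul_pos (by linarith : (0:ℝ) < 1-sΩ) hDpos]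
  nlinarith [mul_pos (by linarith : (0:ℝ) < 1-sΩ) hDpos]

theorem stmt_9 (Ω : Set ℂ) (hΩo : IsOpen Ω) (hΩb : Bornology.IsBounded Ω)
    (z1 z2 : ℂ) (hz1 : z1 ∈ Ω) (hz2 : z2 ∈ Ω) (hz : z1 ≠ z2)
    (sΩ : ℝ)
    (hsΩ : sΩ = sSup {x : ℝ | ∃ p q : Polynomial ℂ,
      (∀ w ∈ closure Ω, q.eval w ≠ 0) ∧
      (∀ w ∈ closure Ω, ‖p.eval w / q.eval w‖ ≤ 1) ∧
      p.eval z2 = 0 ∧ x = ‖p.eval z1 / q.eval z1‖ ^ 2})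
    (s : ℝ) (hs : 0 < s) (hs2 : s ^ 2 = 1 / sΩ - 1)
    (μ : ℂ)
    (A : Matrix (Fin 2) (Fin 2) ℂ)
    (hA : A = !![z1, 0; ((s : ℂ) * μ) * (z1 - z2), z2]) :
    (∀ p q : Polynomial ℂ,
      (∀ w ∈ closure Ω, q.eval w ≠ 0) →
      (∀ w ∈ closure Ω, ‖p.eval w / q.eval w‖ ≤ 1) →
      ratNormAt A p q ≤ 1) ↔ ‖μ‖ ≤ 1 := by
  subst hA
  have hd : z1 - z2 ≠ 0 := sub_ne_zero.2 hz
  have hz1c : z1 ∈ closure Ω := subset_closure hz1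
  have hz2c : z2 ∈ closure Ω := subset_closure hz2
  have habs : ∀ w : ℂ, ‖((s:ℂ)*μ) * w‖^2
      = s^2 * ‖μ‖^2 * ‖w‖^2 := by
    intro w
    rw [norm_mul, norm_mul, Complex.norm_real, Real.norm_eq_abs, _root_.abs_of_pos hs]
    ring
  have hchar : ∀ p q : Polynomial ℂ, (∀ w ∈ closure Ω, q.eval w ≠ 0) →
      (ratNormAt !![z1, 0; ((s : ℂ) * μ) * (z1 - z2), z2] p q ≤ 1 ↔
        (‖p.eval z1 / q.eval z1‖ ≤ 1 ∧
         ‖p.eval z2 / q.eval z2‖ ≤ 1 ∧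
         ‖((s:ℂ)*μ) * (p.eval z1 / q.eval z1 - p.eval z2 / q.eval z2)‖^2 ≤
           (1 - ‖p.eval z1/q.eval z1‖^2)
             * (1 - ‖p.eval z2/q.eval z2‖^2))) := by
    intro p q hq
    unfold ratNormAt
    rw [ratApply z1 z2 _ hd p q (hq z1 hz1c) (hq z2 hz2c)]
    have harg : (s:ℂ) * μ * (z1 - z2) * (p.eval z1 / q.eval z1 - p.eval z2 / q.eval z2) / (z1 - z2)
        = ((s:ℂ)*μ) * (p.eval z1 / q.eval z1 - p.eval z2 / q.eval z2) := by
      field_simp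
    rw [harg]
    exact normChar _ _ _
  have hsΩpos : 0 < sΩ := by
    by_contra hle
    push_neg at hle
    rcases hle.eq_or_lt with h0|h0
    · rw [h0, div_zero] at hs2
      nlinarith [sq_nonneg s]
    · have : 1 / sΩ < 0 := one_div_neg.2 h0
      nlinarith [sq_nonneg s]
  have h1s : 1/sΩ = s^2 + 1 := by linarith
  have hprod : sΩ * (s^2 + 1) = 1 := by
    rw [← h1s]
    field_simp
  have hsΩlt : sΩ < 1 := by nlinarith [mul_pos hsΩpos (pow_pos hs 2)]
  constructor
  · intro h
    have hSle : sΩ ≤ 1 / (1 + s^2 * ‖μ‖^2) := by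
      rw [hsΩ]
      apply csSup_le
      · exact ⟨0, 0, 1, by simp, by simp, by simp, by simp⟩
      · rintro x ⟨p, q, hq, hsupx, hp2, rfl⟩
        have hb0 : p.eval z2 / q.eval z2 = 0 := by rw [hp2, zero_div]
        obtain ⟨ha1, -, hkey⟩ := (hchar p q hq).1 (h p q hq hsupx)
        rw [hb0, sub_zero] at hkey
        rw [habs] at hkey
        simp only [norm_zero] at hkey
        have hden : (0:ℝ) < 1 + s^2 * ‖μ‖^2 := by positivity
        rw [le_div_iff₀ hden]
        nlinarith [hkey]
    have hden : (0:ℝ) < 1 + s^2 * ‖μ‖^2 := by positivity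
    rw [le_div_iff₀ hden] at hSle
    have hK2 : ‖μ‖^2 ≤ 1 := by nlinarith [pow_pos hs 2]
    nlinarith [norm_nonneg μ]
  · intro hμ p q hq hsup
    rw [hchar p q hq]
    have ha1 : ‖p.eval z1 / q.eval z1‖ ≤ 1 := hsup z1 hz1c
    have hb1 : ‖p.eval z2 / q.eval z2‖ ≤ 1 := hsup z2 hz2c
    refine ⟨ha1, hb1, ?_⟩
    rw [habs]
    set a : ℂ := p.eval z1 / q.eval z1 with hadef
    set b : ℂ := p.eval z2 / q.eval z2 with hbdef
    have keymain : s^2 * ‖a - b‖^2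
        ≤ (1 - ‖a‖^2) * (1 - ‖b‖^2) := by
      rcases lt_or_eq_of_le hb1 with hblt | hbeq
      · have hke := key_est Ω z1 z2 hz1 hz2 sΩ hsΩ p q hq hsup hblt
        rw [← hadef, ← hbdef] at hke
        have hX : sΩ * (s^2 * ‖a-b‖^2
            - (1 - ‖a‖^2) * (1 - ‖b‖^2)) ≤ 0 := by
          nlinarith [hke, hprod]
        by_contra hcon
        push_neg at hcon
        nlinarith [mul_pos hsΩpos (sub_pos.2 hcon)]
      · -- |b| = 1
        have hEb : 1 - ‖b‖^2 = 0 := by rw [hbeq]; norm_num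
        have hD0 : ‖a - b‖ = 0 := by
          by_contra hD
          have hDpos : 0 < ‖a-b‖^2 := by
            have := norm_nonneg (a-b)
            rcases this.eq_or_lt with h'|h'
            · exact absurd h'.symm hD
            · positivity
          set D : ℝ := ‖a-b‖^2 with hDdef
          set ε : ℝ := min (1/2 : ℝ) ((1 - sΩ) * D / 16) with hεdef
          have hεpos : 0 < ε := lt_min (by norm_num) (div_pos (mul_pos (by linarith) hDpos) (by norm_num))
          have hεhalf : ε ≤ 1/2 := min_le_left _ _
          have hε16 : ε ≤ (1 - sΩ) * D / 16 := min_le_right _ _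
          have hcoeff : ‖((1 - ε : ℝ) : ℂ)‖ = 1 - ε := by
            rw [Complex.norm_real, Real.norm_eq_abs, _root_.abs_of_nonneg (by linarith)]
          have hsupε : ∀ w ∈ closure Ω,
              ‖(Polynomial.C ((1 - ε : ℝ) : ℂ) * p).eval w / q.eval w‖ ≤ 1 := by
            intro w hw
            rw [Polynomial.eval_mul, Polynomial.eval_C, mul_div_assoc, norm_mul, hcoeff]
            have := hsup w hw
            nlinarith [norm_nonneg (p.eval w / q.eval w)]
          have hbltε : ‖(Polynomial.C ((1 - ε : ℝ) : ℂ) * p).eval z2 / q.eval z2‖ < 1 := by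
            rw [Polynomial.eval_mul, Polynomial.eval_C, mul_div_assoc, norm_mul, hcoeff,
              ← hbdef, hbeq]
            linarith
          have hke := key_est Ω z1 z2 hz1 hz2 sΩ hsΩ _ q hq hsupε hbltε
          rw [Polynomial.eval_mul, Polynomial.eval_mul, Polynomial.eval_C, Polynomial.eval_C] at hke
          rw [mul_div_assoc, mul_div_assoc, ← hadef, ← hbdef] at hke
          rw [← mul_sub, norm_mul, norm_mul, norm_mul, hcoeff] at hke
          rw [mul_pow, mul_pow, mul_pow, hbeq] at hke
          exact eps_contra sΩ ε (‖a‖) (‖a-b‖^2) hsΩpos hsΩlt hDpos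
            hεpos hεhalf hε16 (norm_nonneg a) ha1 hke
        rw [hD0, hEb]
        norm_num
    have hs2D : 0 ≤ s^2 * ‖a-b‖^2 := by positivity
    nlinarith [keymain, norm_nonneg μ, hμ, hs2D,
      mul_le_mul_of_nonneg_right (by nlinarith [norm_nonneg μ] : ‖μ‖^2 ≤ 1) hs2D]
end

section
/- Let z1, z2 ∈ ℂ with |z1| < 1 and |z2| < 1. For η ∈ ℂ define the 2×2 complex matrix T_η = !![z1, 0; η * Real.sqrt ((1 − |z1|²) * (1 − |z2|²)), z2]. Then for μ, μ' ∈ ℂ, there exists a unitary U ∈ Matrix.unitaryGroup (Fin 2) ℂ with T_{μ'} = U * T_μ * star U if and only if |μ'| = |μ|. -/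
open Matrix

/-- The matrix `T_η` of (3.6): `!![z1, 0; η √((1-|z1|²)(1-|z2|²)), z2]`. -/
noncomputable def Tmat (z1 z2 η : ℂ) : Matrix (Fin 2) (Fin 2) ℂ :=
  !![z1, 0;
     η * (Real.sqrt ((1 - ‖z1‖ ^ 2) * (1 - ‖z2‖ ^ 2)) : ℂ), z2]

theorem stmt_11 (z1 z2 : ℂ) (h1 : ‖z1‖ < 1) (h2 : ‖z2‖ < 1)
    (μ μ' : ℂ) :
    (∃ U : Matrix (Fin 2) (Fin 2) ℂ, U ∈ Matrix.unitaryGroup (Fin 2) ℂ ∧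
      Tmat z1 z2 μ' = U * Tmat z1 z2 μ * star U) ↔
    ‖μ'‖ = ‖μ‖ := by
  set c : ℝ := Real.sqrt ((1 - ‖z1‖ ^ 2) * (1 - ‖z2‖ ^ 2)) with hc
  have hcpos : 0 < c := by
    apply Real.sqrt_pos.mpr
    apply mul_pos <;> nlinarith [norm_nonneg z1, norm_nonneg z2]
  constructor
  · rintro ⟨U, hU, hEq⟩
    have hU1 : star U * U = 1 := hU.1
    have hU2 : U * star U = 1 := hU.2
    have hU1' : Uᴴ * U = 1 := hU1
    have htr : Matrix.trace ((Tmat z1 z2 μ')ᴴ * Tmat z1 z2 μ') =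
        Matrix.trace ((Tmat z1 z2 μ)ᴴ * Tmat z1 z2 μ) := by
      rw [hEq]
      have : (U * Tmat z1 z2 μ * star U)ᴴ * (U * Tmat z1 z2 μ * star U)
          = U * ((Tmat z1 z2 μ)ᴴ * Tmat z1 z2 μ) * star U := by
        simp only [Matrix.conjTranspose_mul, Matrix.conjTranspose_conjTranspose,
          Matrix.star_eq_conjTranspose, Matrix.mul_assoc]
        rw [← Matrix.mul_assoc Uᴴ U, hU1', Matrix.one_mul]
      rw [this, Matrix.trace_mul_cycle, show (star U : Matrix (Fin 2) (Fin 2) ℂ) * U = 1 from hU1,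
        Matrix.one_mul]
    have key : (Complex.normSq μ' : ℂ) * (c : ℂ)^2 = (Complex.normSq μ : ℂ) * (c : ℂ)^2 := by
      simp [Matrix.trace_fin_two, Matrix.mul_apply, Matrix.conjTranspose_apply,
        Fin.sum_univ_two, Tmat] at htr
      rw [← hc] at htr
      rw [Complex.normSq_eq_conj_mul_self, Complex.normSq_eq_conj_mul_self]
      linear_combination htr
    have keyR : Complex.normSq μ' * c^2 = Complex.normSq μ * c^2 := by
      exact_mod_cast key
    have hns : Complex.normSq μ' = Complex.normSq μ :=
      mul_right_cancel₀ (by positivity : (c:ℝ)^2 ≠ 0) keyR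
    have h2' : ‖μ'‖ ^ 2 = ‖μ‖ ^ 2 := by
      rw [Complex.sq_norm, Complex.sq_norm]; exact hns
    nlinarith [norm_nonneg μ, norm_nonneg μ']
  · intro habs
    by_cases hμ : μ = 0
    · have hμ' : μ' = 0 := by
        apply norm_eq_zero.mp
        rw [habs, hμ]; simp
      exact ⟨1, Submonoid.one_mem _, by simp [hμ, hμ']⟩
    · have hμa : ‖μ‖ ≠ 0 := norm_ne_zero_iff.mpr hμ
      have hω : (μ' / μ) * (starRingEnd ℂ) (μ' / μ) = 1 := by
        rw [Complex.mul_conj]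
        norm_cast
        rw [Complex.normSq_div, Complex.normSq_eq_norm_sq, Complex.normSq_eq_norm_sq, habs,
          div_self (pow_ne_zero 2 hμa)]
      refine ⟨!![1, 0; 0, μ' / μ], ?_, ?_⟩
      · rw [Matrix.mem_unitaryGroup_iff]
        ext i j
        fin_cases i <;> fin_cases j <;>
          simp [Matrix.mul_apply, Fin.sum_univ_two, Matrix.conjTranspose_apply,
            Matrix.star_eq_conjTranspose, Matrix.one_apply] <;>
          simpa using hω
      · ext i j
        fin_cases i <;> fin_cases j <;>
          simp [Tmat, Matrix.mul_apply, Fin.sum_univ_two, Matrix.conjTranspose_apply,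
            Matrix.star_eq_conjTranspose]
        · field_simp
        · have hω2 : μ' * (starRingEnd ℂ) μ' = μ * (starRingEnd ℂ) μ := by
            rw [Complex.mul_conj, Complex.mul_conj]
            norm_cast
            simp [Complex.normSq_eq_norm_sq, habs]
          have hcμ : (starRingEnd ℂ) μ ≠ 0 := by simpa using hμ
          field_simp [hcμ]
          linear_combination -z2 * hω2
end

section
/- Let n ∈ ℕ, let E = EuclideanSpace ℂ (Fin n), let T : E →L[ℂ] E, let z : Fin n → ℂ be injective, and let v : Fin n → E be linearly independent vectors such that the adjoint T* satisfies T* (v i) = (conj (z i)) • v i for every i. Then for every polynomial p ∈ ℂ[X], the operator norm of Polynomial.aeval T p (in the algebra of continuous linear endomorphisms of E) satisfies ‖Polynomial.aeval T p‖ ≤ 1 if and only if the n×n matrix M with entries M i j = (1 − p.eval (z i) * conj (p.eval (z j))) * ⟪v i, v j⟫ is positive semidefinite (Matrix.PosSemidef M). -/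
open scoped ComplexOrder
theorem stmt_12 (n : ℕ)
    (T : EuclideanSpace ℂ (Fin n) →L[ℂ] EuclideanSpace ℂ (Fin n))
    (z : Fin n → ℂ) (hz : Function.Injective z)
    (v : Fin n → EuclideanSpace ℂ (Fin n)) (hv : LinearIndependent ℂ v)
    (hT : ∀ i, ContinuousLinearMap.adjoint T (v i) = (starRingEnd ℂ) (z i) • v i)
    (p : Polynomial ℂ) :
    ‖Polynomial.aeval T p‖ ≤ 1 ↔
      Matrix.PosSemidef (Matrix.of fun i j : Fin n =>
        (1 - p.eval (z i) * (starRingEnd ℂ) (p.eval (z j))) *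
          (inner ℂ (v i) (v j) : ℂ)) := by
  classical
  set S : EuclideanSpace ℂ (Fin n) →L[ℂ] EuclideanSpace ℂ (Fin n) := Polynomial.aeval T p with hSdef
  set w : Fin n → ℂ := fun i => p.eval (z i) with hw
  -- inner product against eigenvectors
  have keyT : ∀ (k : ℕ) (i) (y : EuclideanSpace ℂ (Fin n)), (inner ℂ (v i) ((T ^ k) y) : ℂ) = z i ^ k * inner ℂ (v i) y := by
    intro k
    induction k with
    | zero => intro i y; simp
    | succ k ih =>
      intro i y
      have h1 : (T ^ (k + 1)) y = (T ^ k) (T y) := by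
        rw [pow_succ]; rfl
      rw [h1, ih, ← ContinuousLinearMap.adjoint_inner_left, hT, inner_smul_left]
      simp [pow_succ]
      ring
  have key : ∀ (q : Polynomial ℂ) (i) (y : EuclideanSpace ℂ (Fin n)),
      (inner ℂ (v i) ((Polynomial.aeval T q) y) : ℂ) = q.eval (z i) * inner ℂ (v i) y := by
    intro q
    induction q using Polynomial.induction_on' with
    | add a b ha hb =>
      intro i y
      simp [map_add, ContinuousLinearMap.add_apply, inner_add_right, ha, hb, add_mul]
    | monomial k a =>
      intro i y
      rw [Polynomial.aeval_monomial]
      have : (algebraMap ℂ (EuclideanSpace ℂ (Fin n) →L[ℂ] EuclideanSpace ℂ (Fin n)) a * T ^ k) y = a • ((T ^ k) y) := by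
        simp [Algebra.algebraMap_eq_smul_one, ContinuousLinearMap.smul_apply]
      rw [this, inner_smul_right, keyT]
      simp [Polynomial.eval_monomial]
      ring
  have adj : ∀ i, (ContinuousLinearMap.adjoint S) (v i) = (starRingEnd ℂ) (w i) • v i := by
    intro i
    apply ext_inner_right ℂ
    intro y
    rw [ContinuousLinearMap.adjoint_inner_left, key, inner_smul_left]
    simp [hw]
  set Sa := ContinuousLinearMap.adjoint S with hSa
  have normSa : ‖Sa‖ = ‖S‖ := ContinuousLinearMap.adjoint.norm_map S
  set M : Matrix (Fin n) (Fin n) ℂ := Matrix.of fun i j : Fin n =>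
        (1 - p.eval (z i) * (starRingEnd ℂ) (p.eval (z j))) *
          (inner ℂ (v i) (v j) : ℂ) with hM
  -- the quadratic form identity
  have expand : ∀ c : Fin n → ℂ,
      dotProduct (star c) (Matrix.mulVec M c)
        = ((‖∑ i, c i • v i‖ ^ 2 - ‖Sa (∑ i, c i • v i)‖ ^ 2 : ℝ) : ℂ) := by
    intro c
    set x : EuclideanSpace ℂ (Fin n) := ∑ i, c i • v i with hx
    have hxx : ((‖x‖ : ℂ) ^ 2) = inner ℂ x x := (inner_self_eq_norm_sq_to_K (𝕜 := ℂ) x).symm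
    have hSax : Sa x = ∑ i, (c i * (starRingEnd ℂ) (w i)) • v i := by
      rw [hx, map_sum]
      refine Finset.sum_congr rfl fun i _ => ?_
      rw [map_smul, adj, smul_smul]
    have hyy : ((‖Sa x‖ : ℂ) ^ 2) = inner ℂ (Sa x) (Sa x) :=
      (inner_self_eq_norm_sq_to_K (𝕜 := ℂ) (Sa x)).symm
    push_cast
    rw [hxx, hyy, hSax, hx]
    simp only [inner_sum, sum_inner, inner_smul_left, inner_smul_right,
      dotProduct, Matrix.mulVec, Pi.star_apply, Finset.mul_sum, Finset.sum_sub_distrib,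
      ← Finset.sum_sub_distrib]
    conv_rhs => rw [Finset.sum_comm]
    refine Finset.sum_congr rfl fun i _ => ?_
    refine Finset.sum_congr rfl fun j _ => ?_
    simp only [hM, Matrix.of_apply, map_mul, RingHom.id_apply, starRingEnd_self_apply, RCLike.star_def]
    ring
  have herm : M.IsHermitian := by
    ext i j
    simp only [Matrix.conjTranspose_apply, hM, Matrix.of_apply, star_mul', star_sub, star_one]
    rw [← inner_conj_symm (v j) (v i)]
    simp only [RCLike.star_def, starRingEnd_self_apply, map_mul]
    ring_nf
  constructor
  · intro hle
    refine Matrix.posSemidef_iff_dotProduct_mulVec.mpr ⟨herm, fun c => ?_⟩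
    rw [expand c]
    rw [Complex.zero_le_real]
    have h1 : ‖Sa (∑ i, c i • v i)‖ ≤ ‖∑ i, c i • v i‖ := by
      calc ‖Sa (∑ i, c i • v i)‖ ≤ ‖Sa‖ * ‖∑ i, c i • v i‖ := Sa.le_opNorm _
        _ ≤ 1 * ‖∑ i, c i • v i‖ := by
            apply mul_le_mul_of_nonneg_right _ (norm_nonneg _)
            rw [normSa]; exact hle
        _ = ‖∑ i, c i • v i‖ := one_mul _
    have := pow_le_pow_left₀ (norm_nonneg _) h1 2
    linarith
  · intro hpsd
    have hb : ∀ x : EuclideanSpace ℂ (Fin n), ‖Sa x‖ ≤ ‖x‖ := by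
      intro x
      have hcard : Fintype.card (Fin n) = Module.finrank ℂ (EuclideanSpace ℂ (Fin n)) := by
        simp [finrank_euclideanSpace]
      rcases Nat.eq_zero_or_pos n with hn | hn
      · subst hn
        have : x = 0 := Subsingleton.elim x 0
        simp [this]
      have : Nonempty (Fin n) := ⟨⟨0, hn⟩⟩
      set b := basisOfLinearIndependentOfCardEqFinrank hv hcard with hbdef
      have hbv : ⇑b = v := coe_basisOfLinearIndependentOfCardEqFinrank hv hcard
      set c : Fin n → ℂ := fun i => b.repr x i with hc
      have hxc : x = ∑ i, c i • v i := by
        conv_lhs => rw [← b.sum_repr x]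
        simp [hbv, hc]
      have h2 := (Matrix.posSemidef_iff_dotProduct_mulVec.mp hpsd).2 c
      rw [expand c, Complex.zero_le_real, ← hxc] at h2
      have := sub_nonneg.mp h2
      exact le_of_pow_le_pow_left₀ two_ne_zero (norm_nonneg _) this
    have : ‖Sa‖ ≤ 1 := Sa.opNorm_le_bound zero_le_one (by simpa [one_mul] using hb)
    rwa [normSa] at this
end
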